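/- Let G be a nontrivial finite group and let I = {C_1, ..., C_t} be a set of conjugacy classes of G. Then I is a minimal invariable generating set of G if and only if: (a) there exist maximal subgroups M_1, ..., M_t of G such that C_i ∩ M_j ≠ ∅ whenever i ≠ j, and (b) no proper subgroup of G intersects every C_i nontrivially. -/

import Mathlib

/-- A set `I` of conjugacy classes of `G` invariably generates `G` if every choice
of one representative from each class of `I` generates `G`. -/
def InvariablyGenerates {G : Type*} [Group G] (I : Set (ConjClasses G)) : Prop :=
  ∀ f : ConjClasses G → G, (∀ c ∈ I, f c ∈ c.carrier) → Subgroup.closure (f '' I) = ⊤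

/-- `I` is a minimal invariable generating set (MIG-set) of `G`. -/
def IsMIG {G : Type*} [Group G] (I : Set (ConjClasses G)) : Prop :=
  InvariablyGenerates I ∧ ∀ J ⊂ I, ¬ InvariablyGenerates J

private lemma carrier_nonempty {G : Type*} [Group G] (c : ConjClasses G) :
    ∃ g, g ∈ c.carrier := by
  obtain ⟨a, rfl⟩ := c.exists_rep
  exact ⟨a, ConjClasses.mem_carrier_iff_mk_eq.2 rfl⟩

private lemma IG_iff {G : Type*} [Group G] (I : Set (ConjClasses G)) :
    InvariablyGenerates I ↔
      ¬ ∃ H : Subgroup G, H ≠ ⊤ ∧ ∀ c ∈ I, ∃ g ∈ c.carrier, g ∈ H := by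
  constructor
  · rintro hIG ⟨H, hH, hmeet⟩
    classical
    set f : ConjClasses G → G := fun c =>
      if h : ∃ g ∈ c.carrier, g ∈ H then h.choose else (carrier_nonempty c).choose with hf
    have hfc : ∀ c ∈ I, f c ∈ c.carrier := by
      intro c hc
      simp only [hf, dif_pos (hmeet c hc)]
      exact (hmeet c hc).choose_spec.1
    have htop := hIG f hfc
    apply hH
    rw [eq_top_iff, ← htop, Subgroup.closure_le]
    rintro _ ⟨c, hc, rfl⟩
    simp only [hf, dif_pos (hmeet c hc)]
    exact (hmeet c hc).choose_spec.2
  · intro h f hf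
    by_contra htop
    exact h ⟨Subgroup.closure (f '' I), htop, fun c hc =>
      ⟨f c, hf c hc, Subgroup.subset_closure ⟨c, hc, rfl⟩⟩⟩

theorem stmt13 {G : Type*} [Group G] [Finite G] (hG : Nontrivial G)
    (I : Set (ConjClasses G)) (hI : I.Finite) :
    IsMIG I ↔
      ((∃ M : I → Subgroup G, ∀ c : I, IsCoatom (M c) ∧
          ∀ d : I, d ≠ c → ∃ g ∈ (d : ConjClasses G).carrier, g ∈ M c) ∧
        ¬ ∃ H : Subgroup G, H ≠ ⊤ ∧ ∀ c ∈ I, ∃ g ∈ c.carrier, g ∈ H) := by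
  constructor
  · rintro ⟨hig, hmin⟩
    refine ⟨?_, (IG_iff I).1 hig⟩
    have key : ∀ c : I, ∃ M : Subgroup G, IsCoatom M ∧
        ∀ d : I, d ≠ c → ∃ g ∈ (d : ConjClasses G).carrier, g ∈ M := by
      intro c
      have hsub : I \ {(c : ConjClasses G)} ⊂ I :=
        Set.sdiff_singleton_ssubset.2 c.2
      have h2 := hmin _ hsub
      rw [IG_iff, not_not] at h2
      obtain ⟨H, hH, hm⟩ := h2
      obtain ⟨M, hM, hHM⟩ := (eq_top_or_exists_le_coatom H).resolve_left hH
      refine ⟨M, hM, fun d hd => ?_⟩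
      obtain ⟨g, hg1, hg2⟩ := hm d ⟨d.2, fun h => hd (Subtype.ext h)⟩
      exact ⟨g, hg1, hHM hg2⟩
    choose M hM using key
    exact ⟨M, hM⟩
  · rintro ⟨⟨M, hM⟩, hb⟩
    refine ⟨(IG_iff I).2 hb, fun J hJ => ?_⟩
    rw [IG_iff, not_not]
    obtain ⟨c, hcI, hcJ⟩ := Set.exists_of_ssubset hJ
    refine ⟨M ⟨c, hcI⟩, (hM ⟨c, hcI⟩).1.1, fun d hd => ?_⟩
    refine (hM ⟨c, hcI⟩).2 ⟨d, hJ.1 hd⟩ (fun h => hcJ ?_)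
    have h' : d = c := congrArg Subtype.val h
    exact h' ▸ hd
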